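/- arXiv:q-alg/9611009 — 2 statements merged into one kernel-verified Lean document; each statement's English description precedes it below -/
import Mathlib

section
/- Let q = e^{2πi n/m} and j = (d-1) + (m/(2n)) z with z ∈ ℤ. Then -[k]_q [j-k+1]_q = (-1)^{z+1} sin(2πnk/m) sin(2πn(d-k)/m) / sin(2πn/m)^2 for all integers k. -/
open Real

/-- Let `q = e^{2πi n/m}` and `j = (d-1) + (m/(2n)) z` with `z ∈ ℤ`, and write the
q-integers as sin-ratios `[x]_q = sin(2πnx/m)/sin(2πn/m)`. Then
`-[k]_q [j-k+1]_q = (-1)^{z+1} sin(2πnk/m) sin(2πn(d-k)/m) / sin(2πn/m)^2`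
for all integers `k`. -/
theorem qint_product_formula (n m : ℕ) (hn : 0 < n) (hm : 2 < m) (hco : Nat.Coprime n m)
    (qint : ℝ → ℝ)
    (hqint : ∀ x : ℝ, qint x = Real.sin (2 * π * n * x / m) / Real.sin (2 * π * n / m))
    (d z k : ℤ) (j : ℝ) (hj : j = ((d : ℝ) - 1) + ((m : ℝ) / (2 * n)) * z) :
    -(qint (k : ℝ) * qint (j - k + 1)) =
      (-1 : ℝ) ^ (z + 1) * Real.sin (2 * π * n * k / m) * Real.sin (2 * π * n * ((d : ℝ) - k) / m)
        / Real.sin (2 * π * n / m) ^ 2 := by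
  have hn' : (n : ℝ) ≠ 0 := Nat.cast_ne_zero.mpr hn.ne'
  have hm' : (m : ℝ) ≠ 0 := Nat.cast_ne_zero.mpr (by omega)
  have key : 2 * π * n * (j - k + 1) / m = 2 * π * n * ((d : ℝ) - k) / m + z * π := by
    rw [hj]; field_simp; ring
  rw [hqint, hqint, key, Real.sin_add_int_mul_pi]
  rw [zpow_add_one₀ (by norm_num : (-1:ℝ) ≠ 0)]
  field_simp
end

section
/- Define a_k = (-1)^k [k]_q! · [j]_q [j-1]_q ⋯ [j-k+1]_q with j = (d-1) + (m/(2n)) z. Then a_k > 0 for all k = 1, …, d-1 if and only if (-1)^{z+1} sin(2πnk/m) sin(2πn(d-k)/m) > 0 for all k = 1, …, d-1. -/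
open Real

/-- Define `a_k = (-1)^k [k]_q! · [j]_q [j-1]_q ⋯ [j-k+1]_q`, i.e. `a_0 = 1` and
`a_k = -[k]_q [j-k+1]_q a_{k-1}`, with `j = (d-1) + (m/(2n)) z` and q-integers given as
sin-ratios. Then `a_k > 0` for all `k = 1, …, d-1` if and only if
`(-1)^{z+1} sin(2πnk/m) sin(2πn(d-k)/m) > 0` for all `k = 1, …, d-1`. -/
theorem unitarity_condition (n m : ℕ) (hn : 0 < n) (hm : 2 < m) (hco : Nat.Coprime n m)
    (qint : ℝ → ℝ)
    (hqint : ∀ x : ℝ, qint x = Real.sin (2 * π * n * x / m) / Real.sin (2 * π * n / m))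
    (d z : ℤ) (hd : 1 ≤ d) (j : ℝ) (hj : j = ((d : ℝ) - 1) + ((m : ℝ) / (2 * n)) * z)
    (a : ℕ → ℝ) (ha0 : a 0 = 1)
    (harec : ∀ k : ℕ, 1 ≤ k → a k = -(qint (k : ℝ) * qint (j - k + 1)) * a (k - 1)) :
    (∀ k : ℕ, 1 ≤ k → (k : ℤ) ≤ d - 1 → 0 < a k) ↔
      (∀ k : ℕ, 1 ≤ k → (k : ℤ) ≤ d - 1 →
        0 < (-1 : ℝ) ^ (z + 1) * Real.sin (2 * π * n * k / m) *
          Real.sin (2 * π * n * ((d : ℝ) - k) / m)) := by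
  have hmR : (0:ℝ) < m := by exact_mod_cast (by omega : 0 < m)
  have hnR : (0:ℝ) < n := by exact_mod_cast hn
  set s := Real.sin (2 * π * n / m) with hs
  have hs0 : s ≠ 0 := by
    rw [hs]
    intro h
    rw [Real.sin_eq_zero_iff] at h
    obtain ⟨k, hk⟩ := h
    have hπ : (0:ℝ) < π := Real.pi_pos
    have h1 : (k:ℝ) * m = 2 * n := by
      field_simp at hk
      nlinarith [hk]
    have h2 : (k * m : ℤ) = 2 * n := by exact_mod_cast h1
    have h3 : (m : ℤ) ∣ 2 * n := ⟨k, by linarith [h2]⟩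
    have h4 : m ∣ 2 * n := by exact_mod_cast h3
    have h5 : m ∣ 2 := (Nat.Coprime.dvd_of_dvd_mul_right hco.symm h4)
    have := Nat.le_of_dvd (by norm_num) h5
    omega
  have hs2 : 0 < s ^ 2 := by positivity
  -- key step relation
  have key : ∀ k : ℕ, 1 ≤ k →
      a k = ((-1 : ℝ) ^ (z + 1) * Real.sin (2 * π * n * k / m) *
        Real.sin (2 * π * n * ((d : ℝ) - k) / m) / s ^ 2) * a (k - 1) := by
    intro k hk
    have harg : 2 * π * n * (j - k + 1) / m = 2 * π * n * ((d : ℝ) - k) / m + z * π := by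
      rw [hj]
      field_simp
      ring
    have hsin : Real.sin (2 * π * n * (j - k + 1) / m)
        = (-1 : ℝ) ^ z * Real.sin (2 * π * n * ((d : ℝ) - k) / m) := by
      rw [harg, Real.sin_add_int_mul_pi]
    have hz1 : (-1 : ℝ) ^ (z + 1) = -((-1 : ℝ) ^ z) := by
      rw [zpow_add_one₀ (by norm_num : (-1:ℝ) ≠ 0)]
      ring
    rw [harec k hk, hqint, hqint, hsin, hz1]
    field_simp
  constructor
  · intro H k hk hkd
    have hprev : 0 < a (k - 1) := by
      rcases Nat.eq_or_lt_of_le hk with h1 | h1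
      · simp [← h1, ha0]
      · exact H (k - 1) (by omega) (by push_cast; omega)
    have hak := H k hk hkd
    have := key k hk
    rw [this] at hak
    have hb : 0 < (-1 : ℝ) ^ (z + 1) * Real.sin (2 * π * n * k / m) *
        Real.sin (2 * π * n * ((d : ℝ) - k) / m) / s ^ 2 :=
      (mul_pos_iff.mp hak).elim (fun h => h.1) (fun h => absurd h.2 (not_lt.mpr hprev.le))
    calc (0:ℝ) < _ / s ^ 2 * s ^ 2 := mul_pos hb hs2
      _ = _ := by field_simp
  · intro H
    have aux : ∀ k : ℕ, (k : ℤ) ≤ d - 1 → 0 < a k := by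
      intro k
      induction k with
      | zero => intro _; simp [ha0]
      | succ p ih =>
        intro hkd
        have hp : 0 < a p := ih (by push_cast at hkd ⊢; omega)
        have hb := H (p + 1) (by omega) hkd
        rw [key (p + 1) (by omega)]
        simp only [Nat.add_sub_cancel]
        push_cast
        push_cast at hb
        exact mul_pos (div_pos hb hs2) hp
    intro k hk hkd
    exact aux k hkd
end
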